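/- Let H₁, H₂ be nonzero complex Hilbert spaces and let W be a linear subspace of B(H₂, H₁). Let S ⊆ B(H₁ × H₂) be the set of all operators x_{a,c,R} : (ζ, η) ↦ (aζ + Rη, cη) for a, c ∈ ℂ and R ∈ W (a subalgebra of B(H₁ × H₂)). Then the commutant S' equals the set of block-diagonal operators (ζ, η) ↦ (Aζ, Dη), where A ∈ B(H₁) and D ∈ B(H₂) satisfy A R = R D for all R ∈ W. -/

import Mathlib

noncomputable section

open Filter

open scoped ENNReal

/-- The commutant of the algebra of operators `(ζ, η) ↦ (a ζ + R η, c η)` on `H₁ ⊕ H₂`,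
for `a, c ∈ ℂ` and `R` in a linear subspace `W ⊆ B(H₂, H₁)`, consists exactly of the
block diagonal operators `A ⊕ D` with `A R = R D` for all `R ∈ W`. -/
theorem commutant_of_upper_triangular
    (H₁ : Type) [NormedAddCommGroup H₁] [InnerProductSpace ℂ H₁] [CompleteSpace H₁] (H₂ : Type) [NormedAddCommGroup H₂] [InnerProductSpace ℂ H₂] [CompleteSpace H₂]
    [Nontrivial H₁] [Nontrivial H₂]
    (W : Submodule ℂ (H₂ →L[ℂ] H₁)) :
    Set.centralizer
      {x : (H₁ × H₂) →L[ℂ] (H₁ × H₂) | ∃ (a c : ℂ) (R : H₂ →L[ℂ] H₁), R ∈ W ∧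
        x = ((a • ContinuousLinearMap.fst ℂ H₁ H₂ +
              R.comp (ContinuousLinearMap.snd ℂ H₁ H₂)).prod
             (c • ContinuousLinearMap.snd ℂ H₁ H₂))}
    = {y : (H₁ × H₂) →L[ℂ] (H₁ × H₂) | ∃ (A : H₁ →L[ℂ] H₁) (D : H₂ →L[ℂ] H₂),
        (∀ R ∈ W, A.comp R = R.comp D) ∧ y = A.prodMap D} := by
  ext y
  simp only [Set.mem_centralizer_iff, Set.mem_setOf_eq]
  constructor
  · intro hy
    set A : H₁ →L[ℂ] H₁ :=
      (ContinuousLinearMap.fst ℂ H₁ H₂).comp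
        (y.comp (ContinuousLinearMap.inl ℂ H₁ H₂)) with hA
    set D : H₂ →L[ℂ] H₂ :=
      (ContinuousLinearMap.snd ℂ H₁ H₂).comp
        (y.comp (ContinuousLinearMap.inr ℂ H₁ H₂)) with hD
    have hAapp : ∀ ζ : H₁, A ζ = (y (ζ, 0)).1 := fun ζ => rfl
    have hDapp : ∀ η : H₂, D η = (y (0, η)).2 := fun η => rfl
    have h1 := hy _ ⟨1, 0, 0, W.zero_mem, rfl⟩
    have h2 := hy _ ⟨0, 1, 0, W.zero_mem, rfl⟩
    have h1' : ∀ v : H₁ × H₂, y (v.1, 0) = ((y v).1, 0) := by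
      intro v
      have := congrFun (congrArg (DFunLike.coe) h1.symm) v
      simpa using this
    have h2' : ∀ v : H₁ × H₂, y (0, v.2) = (0, (y v).2) := by
      intro v
      have := congrFun (congrArg (DFunLike.coe) h2.symm) v
      simpa using this
    have key : ∀ ζ η, y (ζ, η) = (A ζ, D η) := by
      intro ζ η
      have e1 : (y (ζ, η)).1 = A ζ := by
        have := h1' (ζ, η)
        rw [hAapp]
        exact congrArg Prod.fst this.symm ▸ (congrArg Prod.fst this).symm
      have e2 : (y (ζ, η)).2 = D η := by
        have := h2' (ζ, η)
        rw [hDapp]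
        exact (congrArg Prod.snd this).symm
      exact Prod.ext e1 e2
    refine ⟨A, D, ?_, ?_⟩
    · intro R hR
      have h3 := hy _ ⟨0, 0, R, hR, rfl⟩
      ext η
      have e0 := congrFun (congrArg (DFunLike.coe) h3) ((0 : H₁), η)
      simp only [ContinuousLinearMap.mul_apply, key, ContinuousLinearMap.prod_apply,
        ContinuousLinearMap.add_apply, ContinuousLinearMap.smul_apply,
        ContinuousLinearMap.coe_fst', ContinuousLinearMap.coe_snd',
        ContinuousLinearMap.comp_apply, zero_smul, zero_add,
        ContinuousLinearMap.zero_apply, map_zero, Prod.mk.injEq] at e0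
      simp only [ContinuousLinearMap.comp_apply]
      first
      | exact e0.1
      | exact e0.1.symm
    · refine ContinuousLinearMap.ext fun v => ?_
      simpa [Prod.map] using key v.1 v.2
  · rintro ⟨A, D, hAD, rfl⟩ m ⟨a, c, R, hR, rfl⟩
    have hc : ∀ v : H₂, A (R v) = R (D v) := fun v =>
      congrFun (congrArg DFunLike.coe (hAD R hR)) v
    refine ContinuousLinearMap.ext fun v => ?_
    simp [ContinuousLinearMap.mul_apply, Prod.ext_iff, hc, map_add, map_smul]
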